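/- Let 0 < s < 1, b > 0, q > 1, and define g(c) = Γ((1−s)/2) − q·(√π/Γ(1+s/2))·c^{s/2}·₂F₁(s/2, (1+s)/2; 1+s/2; c) for c ∈ [0,1). Then g is strictly decreasing on (0,1), g(0) = Γ((1−s)/2) > 0, and lim_{c→1⁻} g(c) = (1−q)·Γ((1−s)/2) < 0. Consequently g has a unique zero c* ∈ (0,1). -/

import Mathlib

open Real Set Filter

/-- The Gauss hypergeometric function `₂F₁(α, β; γ; x)` as a power series sum. -/
noncomputable def twoF1 (α β γ x : ℝ) : ℝ :=
  ∑' k : ℕ, ((ascPochhammer ℝ k).eval α * (ascPochhammer ℝ k).eval β /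
      ((ascPochhammer ℝ k).eval γ * (Nat.factorial k))) * x ^ k

/-- The auxiliary function determining the endpoint of the equilibrium support. -/
noncomputable def gfun (s q c : ℝ) : ℝ :=
  Real.Gamma ((1 - s) / 2) -
    q * (Real.sqrt Real.pi / Real.Gamma (1 + s / 2)) * c ^ (s / 2) *
      twoF1 (s / 2) ((1 + s) / 2) (1 + s / 2) c


open MeasureTheory

/-- Coefficients of the binomial series `(1-t)^(-r)`. -/
noncomputable def ucoef (r : ℝ) (k : ℕ) : ℝ := (ascPochhammer ℝ k).eval r / (Nat.factorial k)

lemma ucoef_zero (r : ℝ) : ucoef r 0 = 1 := by simp [ucoef]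

lemma ucoef_succ (r : ℝ) (k : ℕ) :
    ucoef r (k + 1) = ucoef r k * ((r + k) / (k + 1)) := by
  have h : ((Nat.factorial (k+1) : ℝ)) = (k+1) * (Nat.factorial k) := by
    push_cast [Nat.factorial_succ]; ring
  have hk : ((Nat.factorial k : ℝ)) ≠ 0 := by positivity
  simp only [ucoef, ascPochhammer_succ_eval, h]
  rw [div_mul_div_comm]
  ring

lemma ucoef_pos {r : ℝ} (hr : 0 < r) (k : ℕ) : 0 < ucoef r k := by
  have := ascPochhammer_pos k r hr
  have : (0:ℝ) < (Nat.factorial k : ℝ) := by positivity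
  exact div_pos (ascPochhammer_pos k r hr) this

lemma ucoef_le_one {r : ℝ} (hr0 : 0 < r) (hr1 : r ≤ 1) (k : ℕ) : ucoef r k ≤ 1 := by
  induction k with
  | zero => simp [ucoef_zero]
  | succ n ih =>
    rw [ucoef_succ]
    have h1 : (r + n) / (n + 1) ≤ 1 := by
      rw [div_le_one (by positivity)]
      linarith
    have h2 : 0 ≤ (r + n) / (n + 1 : ℝ) := by positivity
    calc ucoef r n * ((r + n) / (n + 1)) ≤ 1 * 1 :=
          mul_le_mul ih h1 h2 zero_le_one
      _ = 1 := one_mul 1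

lemma summable_ucoef_mul_pow {r : ℝ} (hr0 : 0 < r) (hr1 : r ≤ 1) {y : ℝ} (hy : |y| < 1) :
    Summable (fun k => ucoef r k * y ^ k) := by
  refine Summable.of_norm_bounded (summable_geometric_of_lt_one (abs_nonneg y) hy) ?_
  intro k
  rw [norm_mul, norm_pow]
  calc ‖ucoef r k‖ * |y| ^ k ≤ 1 * |y| ^ k := by
        refine mul_le_mul_of_nonneg_right ?_ (by positivity)
        rw [Real.norm_eq_abs, abs_of_pos (ucoef_pos hr0 k)]
        exact ucoef_le_one hr0 hr1 k
    _ = |y| ^ k := one_mul _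

theorem binom_tsum {r : ℝ} (hr0 : 0 < r) (hr1 : r ≤ 1) {t : ℝ} (ht0 : 0 ≤ t) (ht1 : t < 1) :
    (∑' k : ℕ, ucoef r k * t ^ k) = (1 - t) ^ (-r) := by
  set ρ : ℝ := (1 + t) / 2 with hρ
  have hρ0 : 0 < ρ := by rw [hρ]; linarith
  have hρ1 : ρ < 1 := by rw [hρ]; linarith
  have htρ : t < ρ := by rw [hρ]; linarith
  set I : Set ℝ := Ioo (-ρ) ρ with hI
  set F : ℝ → ℝ := fun y => ∑' k : ℕ, ucoef r k * y ^ k with hF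
  have hgeom : Summable (fun n : ℕ => ((n : ℝ) + 1) * ρ ^ n) := by
    have := summable_pow_mul_geometric_of_norm_lt_one (R := ℝ) 1
      (r := ρ) (by rw [Real.norm_eq_abs, abs_of_pos hρ0]; exact hρ1)
    simpa [add_mul, one_mul, pow_one] using this.add
      (summable_geometric_of_lt_one hρ0.le hρ1)
  set u : ℕ → ℝ := fun n => (n : ℝ) * ρ ^ (n - 1) with hu
  have husum : Summable u := by
    rw [← summable_nat_add_iff 1]
    refine hgeom.congr fun n => ?_
    simp [hu]
  have habs : ∀ y ∈ I, |y| < 1 := by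
    intro y hy
    exact lt_trans (abs_lt.mpr ⟨hy.1, hy.2⟩) hρ1
  have habsρ : ∀ y ∈ I, |y| ≤ ρ := fun y hy => (abs_lt.mpr ⟨hy.1, hy.2⟩).le
  have hunorm : ∀ n, ‖ucoef r n‖ ≤ 1 := by
    intro n
    rw [Real.norm_eq_abs, abs_of_pos (ucoef_pos hr0 n)]; exact ucoef_le_one hr0 hr1 n
  have hbound : ∀ (n : ℕ) (y : ℝ), y ∈ I → ‖ucoef r n * ((n : ℝ) * y ^ (n - 1))‖ ≤ u n := by
    intro n y hy
    rw [norm_mul, norm_mul, norm_pow, Real.norm_eq_abs (y), Real.norm_natCast]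
    calc ‖ucoef r n‖ * ((n:ℝ) * |y| ^ (n-1)) ≤ 1 * ((n:ℝ) * ρ ^ (n-1)) := by
          refine mul_le_mul (hunorm n) ?_ (by positivity) zero_le_one
          exact mul_le_mul_of_nonneg_left
            (pow_le_pow_left₀ (abs_nonneg y) (habsρ y hy) _) (Nat.cast_nonneg n)
      _ = u n := one_mul _
  have hderivterm : ∀ (n : ℕ) (y : ℝ), y ∈ I →
      HasDerivAt (fun z => ucoef r n * z ^ n) (ucoef r n * ((n : ℝ) * y ^ (n - 1))) y :=
    fun n y _ => (hasDerivAt_pow n y).const_mul _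
  have ht0' : t ∈ I := ⟨by linarith, htρ⟩
  have hsum0 : Summable (fun n => ucoef r n * t ^ n) :=
    summable_ucoef_mul_pow hr0 hr1 (by rw [abs_of_nonneg ht0]; exact ht1)
  have hFderiv : ∀ y ∈ I, HasDerivAt F (∑' n : ℕ, ucoef r n * ((n : ℝ) * y ^ (n - 1))) y :=
    fun y hy => hasDerivAt_tsum_of_isPreconnected husum isOpen_Ioo isPreconnected_Ioo
      hderivterm hbound ht0' hsum0 hy
  have hSummableAt : ∀ y ∈ I, Summable (fun n => ucoef r n * y ^ n) :=
    fun y hy => summable_ucoef_mul_pow hr0 hr1 (habs y hy)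
  have hDsum : ∀ y ∈ I, Summable (fun n => ucoef r n * ((n : ℝ) * y ^ (n - 1))) :=
    fun y hy => Summable.of_norm_bounded husum fun n => hbound n y hy
  have hS1 : ∀ y ∈ I, Summable (fun n => ucoef r n * (r + n) * y ^ n) := by
    intro y hy
    refine Summable.of_norm_bounded hgeom fun n => ?_
    rw [norm_mul, norm_mul, norm_pow, Real.norm_eq_abs y]
    have h1 : ‖(r + (n:ℝ))‖ ≤ (n:ℝ) + 1 := by
      rw [Real.norm_eq_abs, abs_of_pos (by positivity)]; linarith
    calc ‖ucoef r n‖ * ‖(r + (n:ℝ))‖ * |y| ^ n ≤ 1 * ((n:ℝ) + 1) * ρ ^ n := by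
          refine mul_le_mul (mul_le_mul (hunorm n) h1 (norm_nonneg _) zero_le_one)
            (pow_le_pow_left₀ (abs_nonneg y) (habsρ y hy) _) (by positivity) (by positivity)
      _ = ((n:ℝ) + 1) * ρ ^ n := by ring
  have hS2 : ∀ y ∈ I, Summable (fun n => ucoef r n * ((n : ℝ) * y ^ n)) := by
    intro y hy
    refine Summable.of_norm_bounded hgeom fun n => ?_
    rw [norm_mul, norm_mul, norm_pow, Real.norm_eq_abs y, Real.norm_natCast]
    calc ‖ucoef r n‖ * ((n:ℝ) * |y| ^ n) ≤ 1 * (((n:ℝ) + 1) * ρ ^ n) := by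
          refine mul_le_mul (hunorm n) ?_ (by positivity) zero_le_one
          refine mul_le_mul (by linarith) (pow_le_pow_left₀ (abs_nonneg y) (habsρ y hy) _)
            (by positivity) (by positivity)
      _ = ((n:ℝ) + 1) * ρ ^ n := one_mul _
  have key : ∀ y ∈ I, (1 - y) * (∑' n : ℕ, ucoef r n * ((n : ℝ) * y ^ (n - 1))) = r * F y := by
    intro y hy
    have hshift : (∑' n : ℕ, ucoef r n * ((n : ℝ) * y ^ (n - 1)))
        = ∑' n : ℕ, ucoef r n * (r + n) * y ^ n := by
      rw [Summable.tsum_eq_zero_add (hDsum y hy)]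
      simp only [Nat.cast_zero, zero_mul, mul_zero, zero_add]
      refine tsum_congr fun n => ?_
      rw [ucoef_succ]
      push_cast
      have h : (n : ℝ) + 1 ≠ 0 := by positivity
      field_simp
    have hymul : y * (∑' n : ℕ, ucoef r n * ((n : ℝ) * y ^ (n - 1)))
        = ∑' n : ℕ, ucoef r n * ((n : ℝ) * y ^ n) := by
      rw [← tsum_mul_left]
      refine tsum_congr fun n => ?_
      cases n with
      | zero => simp
      | succ m => simp only [Nat.add_sub_cancel]; push_cast; ring
    have expand : (1 - y) * (∑' n : ℕ, ucoef r n * ((n : ℝ) * y ^ (n - 1)))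
        = (∑' n : ℕ, ucoef r n * (r + n) * y ^ n) - ∑' n : ℕ, ucoef r n * ((n : ℝ) * y ^ n) := by
      rw [sub_mul, one_mul, hymul, hshift]
    rw [expand, ← Summable.tsum_sub (hS1 y hy) (hS2 y hy), hF]
    rw [← tsum_mul_left]
    refine tsum_congr fun n => ?_
    ring
  -- G is constant on [0, t]
  set G : ℝ → ℝ := fun y => F y * (1 - y) ^ r with hG
  have hGderiv : ∀ y ∈ I, HasDerivAt G 0 y := by
    intro y hy
    have hy1 : (0:ℝ) < 1 - y := by
      have : y < 1 := lt_trans hy.2 hρ1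
      linarith
    have hd2 : HasDerivAt (fun z : ℝ => (1 - z) ^ r) (r * (1 - y) ^ (r - 1) * (-1)) y := by
      have h1 : HasDerivAt (fun z : ℝ => 1 - z) (-1) y := by
        simpa using (hasDerivAt_id y).const_sub 1
      exact (Real.hasDerivAt_rpow_const (p := r) (Or.inl hy1.ne')).comp y h1
    have hd := (hFderiv y hy).mul hd2
    refine hd.congr_deriv (Eq.symm ?_)
    have hpow : (1 - y) ^ r = (1 - y) * (1 - y) ^ (r - 1) := by
      have h := Real.rpow_add hy1 1 (r - 1)
      simp only [Real.rpow_one] at h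
      rw [show (1:ℝ) + (r - 1) = r by ring] at h
      rw [h]
    rw [hpow]
    linear_combination (-((1 - y) ^ (r - 1))) * (key y hy)
  have hconst : G t = G 0 := by
    have h0t : ∀ x ∈ Icc (0:ℝ) t, x ∈ I := by
      intro x hx
      exact ⟨by linarith [hx.1], by linarith [hx.2]⟩
    have hcont : ContinuousOn G (Icc 0 t) :=
      fun x hx => ((hGderiv x (h0t x hx)).continuousAt).continuousWithinAt
    have := constant_of_has_deriv_right_zero hcont (fun x hx =>
      ((hGderiv x (h0t x ⟨hx.1, hx.2.le⟩)).hasDerivWithinAt))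
    exact this t ⟨ht0, le_refl t⟩
  have hF0 : F 0 = 1 := by
    have hFeq : F 0 = ∑' k : ℕ, ucoef r k * (0:ℝ) ^ k := rfl
    rw [hFeq]
    have : ∀ k : ℕ, k ≠ 0 → ucoef r k * (0:ℝ) ^ k = 0 := by
      intro k hk
      simp [zero_pow hk]
    rw [tsum_eq_single 0 this, pow_zero, mul_one, ucoef_zero]
  have hG0 : G 0 = 1 := by
    rw [hG]; simp [hF0]
  have hft : F t * (1 - t) ^ r = 1 := by
    have := hconst
    rw [hG0] at this
    exact this
  have hne : (1 - t) ^ r ≠ 0 := by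
    have : (0:ℝ) < 1 - t := by linarith
    positivity
  rw [Real.rpow_neg (by linarith)]
  field_simp at hft ⊢
  linarith [hft]

theorem real_beta_integrand_eq {u v : ℝ} (x : ℝ) (hx : 0 ≤ x) (hx1 : x ≤ 1) :
    ((x : ℂ) ^ ((u:ℂ) - 1) * (1 - (x:ℂ)) ^ ((v:ℂ) - 1))
      = ((x ^ (u - 1) * (1 - x) ^ (v - 1) : ℝ) : ℂ) := by
  rw [Complex.ofReal_mul, Complex.ofReal_cpow hx,
    Complex.ofReal_cpow (by linarith : (0:ℝ) ≤ 1 - x)]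
  push_cast
  ring

theorem real_beta {u v : ℝ} (hu : 0 < u) (hv : 0 < v) :
    ∫ t in (0:ℝ)..1, t ^ (u - 1) * (1 - t) ^ (v - 1)
      = Real.Gamma u * Real.Gamma v / Real.Gamma (u + v) := by
  have hre : Complex.betaIntegral u v
      = ((∫ t in (0:ℝ)..1, t ^ (u - 1) * (1 - t) ^ (v - 1) : ℝ) : ℂ) := by
    rw [Complex.betaIntegral, ← intervalIntegral.integral_ofReal]
    refine intervalIntegral.integral_congr fun x hx => ?_
    rw [uIcc_of_le (by norm_num : (0:ℝ) ≤ 1)] at hx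
    exact real_beta_integrand_eq x hx.1 hx.2
  have hgamma := Complex.Gamma_mul_Gamma_eq_betaIntegral
    (s := (u:ℂ)) (t := (v:ℂ)) (by simpa using hu) (by simpa using hv)
  rw [hre] at hgamma
  have : ((Real.Gamma u * Real.Gamma v : ℝ) : ℂ)
      = ((Real.Gamma (u + v) * ∫ t in (0:ℝ)..1, t ^ (u - 1) * (1 - t) ^ (v - 1) : ℝ) : ℂ) := by
    push_cast
    rw [← Complex.Gamma_ofReal, ← Complex.Gamma_ofReal, ← Complex.Gamma_ofReal]
    push_cast
    rw [hgamma]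
  have heq := Complex.ofReal_injective this
  have hG : Real.Gamma (u + v) ≠ 0 := (Real.Gamma_pos_of_pos (by linarith)).ne'
  field_simp
  linarith [heq]

theorem real_beta_integrable {u v : ℝ} (hu : 0 < u) (hv : 0 < v) :
    MeasureTheory.IntegrableOn (fun t : ℝ => t ^ (u - 1) * (1 - t) ^ (v - 1)) (Ioc 0 1) := by
  have hc := Complex.betaIntegral_convergent (u := (u:ℂ)) (v := (v:ℂ))
    (by simpa using hu) (by simpa using hv)
  have h1 : MeasureTheory.IntegrableOn
      (fun x : ℝ => (x : ℂ) ^ ((u:ℂ) - 1) * (1 - (x:ℂ)) ^ ((v:ℂ) - 1)) (Ioc 0 1) := hc.1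
  have h2 := h1.re
  refine MeasureTheory.IntegrableOn.congr_fun h2 (fun x hx => ?_) measurableSet_Ioc
  rw [real_beta_integrand_eq x hx.1.le hx.2]
  simp [RCLike.re_to_complex]

theorem gauss_hasSum {a β : ℝ} (ha : 0 < a) (hβ0 : 0 < β) (hβ1 : β < 1) :
    HasSum (fun k : ℕ => a / (a + k) * ucoef β k)
      (a * (Real.Gamma a * Real.Gamma (1 - β) / Real.Gamma (a + (1 - β)))) := by
  have hv : 0 < 1 - β := by linarith
  set f : ℝ → ℝ := fun t => t ^ (a - 1) * (1 - t) ^ ((1 - β) - 1) with hf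
  set g : ℕ → ℝ → ℝ := fun k t => ucoef β k * t ^ (a - 1 + (k:ℕ)) with hg
  -- value of the beta integral
  set B : ℝ := Real.Gamma a * Real.Gamma (1 - β) / Real.Gamma (a + (1 - β)) with hB
  have hBval : ∫ t in (0:ℝ)..1, f t = B := real_beta ha hv
  have hInt : IntegrableOn f (Ioo 0 1) :=
    (real_beta_integrable ha hv).mono_set Ioo_subset_Ioc_self
  have hIooIoc : ∫ t in Ioo (0:ℝ) 1, f t = ∫ t in (0:ℝ)..1, f t := by
    rw [intervalIntegral.integral_of_le (by norm_num : (0:ℝ) ≤ 1),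
      MeasureTheory.integral_Ioc_eq_integral_Ioo]
  have hfnn : ∀ t ∈ Ioo (0:ℝ) 1, 0 ≤ f t := by
    intro t ht
    have h1 : (0:ℝ) < t := ht.1
    have h2 : (0:ℝ) < 1 - t := by have := ht.2; linarith
    positivity
  -- pointwise series expansion
  have hpt : ∀ t ∈ Ioo (0:ℝ) 1, HasSum (fun k => g k t) (f t) := by
    intro t ht
    have ht0 : (0:ℝ) < t := ht.1
    have ht1 : t < 1 := ht.2
    have habs : |t| < 1 := by rw [abs_of_pos ht0]; exact ht1
    have hs := (summable_ucoef_mul_pow hβ0 hβ1.le habs).hasSum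
    rw [binom_tsum hβ0 hβ1.le ht0.le ht1] at hs
    have hs2 := hs.mul_left (t ^ (a - 1))
    have heq : (fun k : ℕ => t ^ (a - 1) * (ucoef β k * t ^ k)) = fun k => g k t := by
      funext k
      show t ^ (a - 1) * (ucoef β k * t ^ k) = ucoef β k * t ^ (a - 1 + (k:ℕ))
      have h' : t ^ (a - 1 + (k:ℕ)) = t ^ (a-1) * t ^ (k:ℕ) := by
        rw [Real.rpow_add ht0, Real.rpow_natCast]
      rw [h']
      ring
    rw [heq] at hs2
    have hfval : t ^ (a - 1) * (1 - t) ^ (-β) = f t := by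
      rw [hf]
      norm_num
    rwa [hfval] at hs2
  have hgnn : ∀ k, ∀ t ∈ Ioo (0:ℝ) 1, 0 ≤ g k t := by
    intro k t ht
    exact mul_nonneg (ucoef_pos hβ0 k).le (Real.rpow_nonneg ht.1.le _)
  -- Tonelli
  have hmeas : ∀ k : ℕ, AEMeasurable (fun t => ENNReal.ofReal (g k t))
      (volume.restrict (Ioo (0:ℝ) 1)) := by
    intro k
    exact ((measurable_id.pow_const _).const_mul _).ennreal_ofReal.aemeasurable
  have hton : ∫⁻ t in Ioo (0:ℝ) 1, ENNReal.ofReal (f t)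
      = ∑' k : ℕ, ∫⁻ t in Ioo (0:ℝ) 1, ENNReal.ofReal (g k t) := by
    rw [← MeasureTheory.lintegral_tsum hmeas]
    refine MeasureTheory.setLIntegral_congr_fun measurableSet_Ioo (fun t ht => ?_)
    rw [← (hpt t ht).tsum_eq,
      ENNReal.ofReal_tsum_of_nonneg (fun k => hgnn k t ht) (hpt t ht).summable]
  -- value of each term
  have hterm : ∀ k : ℕ, ∫⁻ t in Ioo (0:ℝ) 1, ENNReal.ofReal (g k t)
      = ENNReal.ofReal (ucoef β k / (a + k)) := by
    intro k
    have hexp : (-1:ℝ) < a - 1 + (k:ℕ) := by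
      have : (0:ℝ) ≤ (k:ℕ) := Nat.cast_nonneg k
      linarith
    have hik : IntegrableOn (fun t : ℝ => g k t) (Ioo 0 1) := by
      have h0 : IntegrableOn (fun x : ℝ => x ^ (a - 1 + (k:ℕ))) (Ioc 0 1) :=
        (intervalIntegral.intervalIntegrable_rpow' (a := 0) (b := 1) hexp).1
      have h1 : IntegrableOn (fun x : ℝ => ucoef β k * x ^ (a - 1 + (k:ℕ))) (Ioc 0 1) :=
        h0.const_mul (ucoef β k)
      exact h1.mono_set Ioo_subset_Ioc_self
    rw [← MeasureTheory.ofReal_integral_eq_lintegral_ofReal hik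
      ((ae_restrict_iff' measurableSet_Ioo).mpr (ae_of_all _ fun t ht => hgnn k t ht))]
    congr 1
    have : ∫ t in Ioo (0:ℝ) 1, g k t = ∫ t in (0:ℝ)..1, g k t := by
      rw [intervalIntegral.integral_of_le (by norm_num : (0:ℝ) ≤ 1),
        MeasureTheory.integral_Ioc_eq_integral_Ioo]
    rw [this, hg]
    simp only
    rw [intervalIntegral.integral_const_mul, integral_rpow (Or.inl hexp)]
    have hak : a - 1 + (k:ℕ) + 1 = a + k := by ring
    rw [hak, Real.one_rpow, Real.zero_rpow (by positivity : a + (k:ℝ) ≠ 0)]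
    ring
  -- put together
  have hmain : ∑' k : ℕ, ENNReal.ofReal (ucoef β k / (a + k)) = ENNReal.ofReal B := by
    calc ∑' k : ℕ, ENNReal.ofReal (ucoef β k / (a + k))
        = ∑' k : ℕ, ∫⁻ t in Ioo (0:ℝ) 1, ENNReal.ofReal (g k t) :=
          tsum_congr fun k => (hterm k).symm
      _ = ∫⁻ t in Ioo (0:ℝ) 1, ENNReal.ofReal (f t) := hton.symm
      _ = ENNReal.ofReal (∫ t in Ioo (0:ℝ) 1, f t) :=
          (MeasureTheory.ofReal_integral_eq_lintegral_ofReal hInt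
            ((ae_restrict_iff' measurableSet_Ioo).mpr (ae_of_all _ hfnn))).symm
      _ = ENNReal.ofReal B := by rw [hIooIoc, hBval]
  -- extract real summability and value
  have htermnn : ∀ k : ℕ, 0 ≤ ucoef β k / (a + (k:ℕ)) :=
    fun k => div_nonneg (ucoef_pos hβ0 k).le (by positivity)
  have hfin : (∑' k : ℕ, ENNReal.ofReal (ucoef β k / (a + k))) ≠ ⊤ := by
    rw [hmain]; exact ENNReal.ofReal_ne_top
  have hsummable : Summable (fun k : ℕ => ucoef β k / (a + (k:ℕ))) := by
    have := ENNReal.summable_toReal hfin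
    refine this.congr fun k => ?_
    rw [ENNReal.toReal_ofReal (htermnn k)]
  have hBnn : 0 ≤ B := by
    rw [← hBval, ← hIooIoc]
    exact MeasureTheory.setIntegral_nonneg measurableSet_Ioo hfnn
  have htsum : ∑' k : ℕ, ucoef β k / (a + (k:ℕ)) = B := by
    have h1 : (∑' k : ℕ, ENNReal.ofReal (ucoef β k / (a + k))).toReal
        = ∑' k : ℕ, (ENNReal.ofReal (ucoef β k / (a + (k:ℕ)))).toReal :=
      ENNReal.tsum_toReal_eq fun k => ENNReal.ofReal_ne_top
    rw [hmain, ENNReal.toReal_ofReal hBnn] at h1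
    rw [h1]
    exact (tsum_congr fun k => (ENNReal.toReal_ofReal (htermnn k)).symm)
  have hhs : HasSum (fun k : ℕ => ucoef β k / (a + (k:ℕ))) B := htsum ▸ hsummable.hasSum
  have hfinal := hhs.mul_left a
  have heq2 : (fun k : ℕ => a * (ucoef β k / (a + (k:ℕ)))) = fun k : ℕ => a / (a + k) * ucoef β k := by
    funext k
    ring
  rw [heq2] at hfinal
  rw [hB]
  exact hfinal

lemma poch_shift (a : ℝ) (k : ℕ) :
    (ascPochhammer ℝ k).eval (a + 1) * a = (ascPochhammer ℝ k).eval a * (a + k) := by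
  induction k with
  | zero => simp
  | succ n ih =>
    rw [ascPochhammer_succ_eval, ascPochhammer_succ_eval]
    push_cast
    linear_combination (a + 1 + (n:ℝ)) * ih


/-- `g` is strictly decreasing on `(0,1)`, positive at `0`, tends to
`(1−q)Γ((1−s)/2) < 0` at `1⁻`, and has a unique zero in `(0,1)`. -/
theorem gfun_unique_zero (s b q : ℝ) (hs0 : 0 < s) (hs1 : s < 1) (hb : 0 < b) (hq : 1 < q) :
    StrictAntiOn (gfun s q) (Ioo 0 1) ∧
    gfun s q 0 = Real.Gamma ((1 - s) / 2) ∧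
    0 < Real.Gamma ((1 - s) / 2) ∧
    Tendsto (gfun s q) (nhdsWithin 1 (Iio 1)) (nhds ((1 - q) * Real.Gamma ((1 - s) / 2))) ∧
    (1 - q) * Real.Gamma ((1 - s) / 2) < 0 ∧
    ∃! c, c ∈ Ioo (0 : ℝ) 1 ∧ gfun s q c = 0 := by
  have ha : 0 < s / 2 := by linarith
  have hβ0 : 0 < (1 + s) / 2 := by linarith
  have hβ1 : (1 + s) / 2 < 1 := by linarith
  set a : ℝ := s / 2 with ha'
  set β : ℝ := (1 + s) / 2 with hβ'
  set A : ℕ → ℝ := fun k => ((ascPochhammer ℝ k).eval a * (ascPochhammer ℝ k).eval β /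
      ((ascPochhammer ℝ k).eval (1 + s / 2) * (Nat.factorial k))) with hA'
  have hγ : (1:ℝ) + s / 2 = a + 1 := by rw [ha']; ring
  have hApos : ∀ k, (0:ℝ) < (ascPochhammer ℝ k).eval a ∧
      (0:ℝ) < (ascPochhammer ℝ k).eval β ∧ (0:ℝ) < (ascPochhammer ℝ k).eval (a+1) :=
    fun k => ⟨ascPochhammer_pos k a ha, ascPochhammer_pos k β hβ0,
      ascPochhammer_pos k (a+1) (by linarith)⟩
  have hA : ∀ k, A k = a / (a + k) * ucoef β k := by
    intro k
    obtain ⟨h1, h2, h3⟩ := hApos k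
    have hak : (0:ℝ) < a + k := by positivity
    have hfac : (0:ℝ) < (Nat.factorial k : ℝ) := by positivity
    rw [hA', hγ]
    show (ascPochhammer ℝ k).eval a * (ascPochhammer ℝ k).eval β /
        ((ascPochhammer ℝ k).eval (a+1) * (Nat.factorial k)) = a / (a + k) * ucoef β k
    rw [ucoef]
    have hps := poch_shift a k
    rw [div_mul_div_comm, div_eq_div_iff (mul_pos h3 hfac).ne' (mul_pos hak hfac).ne']
    linear_combination (-(Polynomial.eval β (ascPochhammer ℝ k)) * (Nat.factorial k : ℝ)) * hps
  -- the Gauss sum value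
  have hGauss := gauss_hasSum ha hβ0 hβ1
  have h1β : 1 - β = (1 - s) / 2 := by rw [hβ']; ring
  have hhalf : a + (1 - β) = 1 / 2 := by rw [ha', hβ']; ring
  set Γ1 : ℝ := Real.Gamma ((1 - s) / 2) with hΓ1
  have hΓ1pos : 0 < Γ1 := Real.Gamma_pos_of_pos (by linarith)
  have hΓapos : 0 < Real.Gamma (1 + s / 2) := Real.Gamma_pos_of_pos (by linarith)
  have hπ : (0:ℝ) < Real.sqrt Real.pi := Real.sqrt_pos.mpr Real.pi_pos
  set Sval : ℝ := Real.Gamma (1 + s / 2) * Γ1 / Real.sqrt Real.pi with hSval'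
  have hSval : HasSum (fun k : ℕ => a / (a + k) * ucoef β k) Sval := by
    have h := hGauss
    rw [hhalf, h1β, Real.Gamma_one_half_eq] at h
    have : a * (Real.Gamma a * Real.Gamma ((1-s)/2) / Real.sqrt Real.pi) = Sval := by
      rw [hSval', hγ, Real.Gamma_add_one (ne_of_gt ha), hΓ1]
      ring
    rwa [this] at h
  have hAsum : HasSum A Sval := by
    have : (fun k : ℕ => a / (a + k) * ucoef β k) = A := by
      funext k; rw [hA k]
    rwa [this] at hSval
  have hAnn : ∀ k, 0 ≤ A k := by
    intro k
    rw [hA k]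
    exact mul_nonneg (div_nonneg ha.le (by positivity)) (ucoef_pos hβ0 k).le
  have hA0 : A 0 = 1 := by
    rw [hA 0, ucoef_zero]
    push_cast
    field_simp
    ring
  -- summability on [0,1]
  have hsumc : ∀ c : ℝ, 0 ≤ c → c ≤ 1 → Summable (fun k => A k * c ^ k) := by
    intro c h0 h1
    refine Summable.of_nonneg_of_le (fun k => mul_nonneg (hAnn k) (pow_nonneg h0 k)) (fun k => ?_) hAsum.summable
    calc A k * c ^ k ≤ A k * 1 :=
          mul_le_mul_of_nonneg_left (pow_le_one₀ h0 h1) (hAnn k)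
      _ = A k := mul_one _
  -- T c as a function
  set Φ : ℝ → ℝ := fun c => ∑' k : ℕ, A k * c ^ k with hΦ'
  have hTdef : ∀ c, twoF1 (s / 2) ((1 + s) / 2) (1 + s / 2) c = Φ c := fun c => rfl
  have hΦcont : ContinuousOn Φ (Icc 0 1) := by
    refine continuousOn_tsum (fun k => ((continuous_const.mul (continuous_pow k)).continuousOn))
      hAsum.summable (fun k x hx => ?_)
    rw [norm_mul, norm_pow, Real.norm_eq_abs, Real.norm_eq_abs,
      abs_of_nonneg (hAnn k), abs_of_nonneg hx.1]
    calc A k * x ^ k ≤ A k * 1 :=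
          mul_le_mul_of_nonneg_left (pow_le_one₀ hx.1 hx.2) (hAnn k)
      _ = A k := mul_one _
  have hΦone : ∀ c : ℝ, 0 ≤ c → c ≤ 1 → 1 ≤ Φ c := by
    intro c h0 h1
    have := Summable.le_tsum (hsumc c h0 h1) 0 (fun k _ => mul_nonneg (hAnn k) (pow_nonneg h0 k))
    rwa [hA0, pow_zero, one_mul] at this
  have hΦmono : ∀ c d : ℝ, 0 ≤ c → c ≤ d → d ≤ 1 → Φ c ≤ Φ d := by
    intro c d h0 hcd h1
    refine Summable.tsum_le_tsum (fun k => ?_) (hsumc c h0 (hcd.trans h1)) (hsumc d (h0.trans hcd) h1)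
    exact mul_le_mul_of_nonneg_left (pow_le_pow_left₀ h0 hcd k) (hAnn k)
  have hΦ1 : Φ 1 = Sval := by
    rw [hΦ']
    simp only [one_pow, mul_one]
    exact hAsum.tsum_eq
  set K : ℝ := q * (Real.sqrt Real.pi / Real.Gamma (1 + s / 2)) with hK'
  have hKpos : 0 < K := by
    rw [hK']
    positivity
  have hgdef : ∀ c, gfun s q c = Γ1 - K * (c ^ (s/2) * Φ c) := by
    intro c
    rw [gfun, hTdef, hΓ1, hK']
    ring
  have hKS : K * Sval = q * Γ1 := by
    rw [hK', hSval']
    field_simp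
  -- 1. strict anti
  have hanti : StrictAntiOn (gfun s q) (Ioo 0 1) := by
    intro c hc d hd hcd
    rw [hgdef, hgdef]
    have h1 : c ^ (s/2) < d ^ (s/2) := Real.rpow_lt_rpow hc.1.le hcd ha
    have h2 : (0:ℝ) < c ^ (s/2) := Real.rpow_pos_of_pos hc.1 _
    have h3 : Φ c ≤ Φ d := hΦmono c d hc.1.le hcd.le hd.2.le
    have h4 : 1 ≤ Φ c := hΦone c hc.1.le hc.2.le
    have h5 : c ^ (s/2) * Φ c < d ^ (s/2) * Φ d := by
      calc c ^ (s/2) * Φ c < d ^ (s/2) * Φ c := by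
            exact mul_lt_mul_of_pos_right h1 (by linarith)
        _ ≤ d ^ (s/2) * Φ d := mul_le_mul_of_nonneg_left h3 (Real.rpow_nonneg hd.1.le _)
    have := mul_lt_mul_of_pos_left h5 hKpos
    linarith
  -- 2. value at 0
  have hg0 : gfun s q 0 = Γ1 := by
    rw [hgdef, Real.zero_rpow (ne_of_gt ha)]
    ring
  -- 4. continuity and limit
  have hgcont : ContinuousOn (gfun s q) (Icc 0 1) := by
    have : ContinuousOn (fun c : ℝ => Γ1 - K * (c ^ (s/2) * Φ c)) (Icc 0 1) := by
      refine continuousOn_const.sub (continuousOn_const.mul (ContinuousOn.mul ?_ hΦcont))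
      exact fun x hx => (Real.continuousAt_rpow_const x (s/2)
        (Or.inr ha.le)).continuousWithinAt
    exact this.congr (fun c _ => hgdef c)
  have hg1 : gfun s q 1 = (1 - q) * Γ1 := by
    rw [hgdef, Real.one_rpow, one_mul, hΦ1, hKS]
    ring
  have htends : Tendsto (gfun s q) (nhdsWithin 1 (Iio 1)) (nhds ((1 - q) * Γ1)) := by
    have h1 : ContinuousWithinAt (gfun s q) (Icc 0 1) 1 :=
      hgcont 1 ⟨zero_le_one, le_refl 1⟩
    have h2 : Tendsto (gfun s q) (nhdsWithin 1 (Icc 0 1)) (nhds ((1 - q) * Γ1)) := by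
      rw [← hg1]; exact h1.tendsto
    have h3 : nhdsWithin (1:ℝ) (Iio 1) = nhdsWithin 1 (Ioo 0 1) :=
      (nhdsWithin_Ioo_eq_nhdsLT (zero_lt_one)).symm
    rw [h3]
    exact h2.mono_left (nhdsWithin_mono 1 Ioo_subset_Icc_self)
  have hneg : (1 - q) * Γ1 < 0 := mul_neg_of_neg_of_pos (by linarith) hΓ1pos
  -- 6. unique zero
  have hexu : ∃! c, c ∈ Ioo (0:ℝ) 1 ∧ gfun s q c = 0 := by
    have hivt := intermediate_value_Icc' (zero_le_one) hgcont
    have h0mem : (0:ℝ) ∈ Icc (gfun s q 1) (gfun s q 0) := by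
      rw [hg0, hg1]
      exact ⟨hneg.le, hΓ1pos.le⟩
    obtain ⟨c, hcmem, hc0⟩ := hivt h0mem
    have hcne0 : c ≠ 0 := by
      intro h
      rw [h, hg0] at hc0
      exact hΓ1pos.ne' hc0
    have hcne1 : c ≠ 1 := by
      intro h
      rw [h, hg1] at hc0
      exact hneg.ne hc0
    have hcIoo : c ∈ Ioo (0:ℝ) 1 :=
      ⟨lt_of_le_of_ne hcmem.1 (Ne.symm hcne0), lt_of_le_of_ne hcmem.2 hcne1⟩
    refine ⟨c, ⟨hcIoo, hc0⟩, fun y hy => ?_⟩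
    exact hanti.injOn hy.1 hcIoo (by rw [hy.2, hc0])
  exact ⟨hanti, hg0, hΓ1pos, htends, hneg, hexu⟩
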